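/- Let c₀ > 0, κ > 0 and ε ∈ (0,1) with κc₀|log ε| > 1, and set c_k = c₀(1 + log(1+k)) for k ≥ 0. Then for every d ≥ 0, Σ_{k=0}^d ε^{κ c_k} ≤ ε^{κ c₀} (1 + 1/(κ c₀ |log ε| − 1)), uniformly in d. -/

import Mathlib

open Real


lemma bern_neg {p t : ℝ} (hp : p ≤ 0) (ht : -1 < t) : 1 + p * t ≤ (1 + t) ^ p := by
  have h1t : 0 < 1 + t := by linarith
  rcases le_or_gt (1 + p * t) 0 with h | h
  · exact h.trans (rpow_pos_of_pos h1t p).le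
  · rw [rpow_def_of_pos h1t]
    calc 1 + p * t = Real.exp (Real.log (1 + p * t)) := (Real.exp_log h).symm
    _ ≤ Real.exp (p * Real.log (1 + t)) := by
        apply Real.exp_le_exp.mpr
        have h2 : Real.log (1 + p * t) ≤ p * t := by
          have := Real.log_le_sub_one_of_pos h; linarith
        have h3 : Real.log (1 + t) ≤ t := by
          have := Real.log_le_sub_one_of_pos h1t; linarith
        nlinarith [mul_le_mul_of_nonpos_left h3 hp]
    _ = Real.exp (Real.log (1 + t) * p) := by ring_nf

lemma key_step {s : ℝ} (hs : 1 < s) {a : ℝ} (ha : 1 ≤ a) :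
    (s - 1) * (a + 1) ^ (-s) ≤ a ^ (1 - s) - (a + 1) ^ (1 - s) := by
  have ha1 : (0:ℝ) < a + 1 := by linarith
  have ha0 : (0:ℝ) < a := by linarith
  have ht : (-1:ℝ) < -1 / (a + 1) := by
    rw [neg_div]; rw [neg_lt_neg_iff]; rw [div_lt_one ha1]; linarith
  have hb := bern_neg (p := 1 - s) (t := -1 / (a + 1)) (by linarith) ht
  have heq : (1 + -1 / (a + 1)) = a / (a + 1) := by field_simp; ring
  rw [heq] at hb
  have hdiv : (a / (a + 1)) ^ (1 - s) = a ^ (1 - s) / (a + 1) ^ (1 - s) :=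
    Real.div_rpow ha0.le ha1.le _
  rw [hdiv] at hb
  have hpow : (0:ℝ) < (a + 1) ^ (1 - s) := rpow_pos_of_pos ha1 _
  have hb2 : (1 + (1 - s) * (-1 / (a + 1))) * (a + 1) ^ (1 - s) ≤ a ^ (1 - s) := by
    calc (1 + (1 - s) * (-1 / (a + 1))) * (a + 1) ^ (1 - s)
        ≤ (a ^ (1 - s) / (a + 1) ^ (1 - s)) * (a + 1) ^ (1 - s) :=
          mul_le_mul_of_nonneg_right hb hpow.le
      _ = a ^ (1 - s) := by field_simp
  have hsplit : (a + 1) ^ (1 - s) = (a + 1) ^ (-s) * (a + 1) := by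
    rw [show (1 - s) = -s + 1 by ring, Real.rpow_add ha1, Real.rpow_one]
  have : (1 + (1 - s) * (-1 / (a + 1))) * (a + 1) ^ (1 - s)
      = (a + 1) ^ (1 - s) + (s - 1) * (a + 1) ^ (-s) := by
    rw [hsplit]; field_simp; ring
  linarith [this ▸ hb2]

lemma sum_bound {s : ℝ} (hs : 1 < s) : ∀ d : ℕ,
    ∑ k ∈ Finset.range (d + 1), (1 + (k : ℝ)) ^ (-s)
      ≤ 1 + (1 - ((d : ℝ) + 1) ^ (1 - s)) / (s - 1) := by
  intro d
  induction d with
  | zero => simp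
  | succ n ih =>
    rw [Finset.sum_range_succ]
    have hkey := key_step hs (a := (n : ℝ) + 1) (by linarith [Nat.cast_nonneg (α := ℝ) n])
    have hrw : (1 + ((n+1 : ℕ) : ℝ)) = ((n:ℝ) + 1) + 1 := by push_cast; ring
    rw [hrw]
    have hs1 : (0:ℝ) < s - 1 := by linarith
    have : (((n:ℝ) + 1) + 1) ^ (-s) ≤ (((n:ℝ)+1) ^ (1-s) - (((n:ℝ)+1)+1) ^ (1-s)) / (s-1) := by
      rw [le_div_iff₀ hs1]; linarith
    have hcast : (((n+1 : ℕ) : ℝ) + 1) = ((n:ℝ) + 1) + 1 := by push_cast; ring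
    rw [hcast]
    have h2 : 1 + (1 - ((n:ℝ) + 1) ^ (1 - s)) / (s - 1)
        + (((n:ℝ)+1) ^ (1-s) - (((n:ℝ)+1)+1) ^ (1-s)) / (s-1)
        = 1 + (1 - (((n:ℝ)+1)+1) ^ (1 - s)) / (s - 1) := by ring
    linarith


/-- Summation estimate: with `c_k = c₀(1 + log(1+k))` and `κ c₀ |log ε| > 1`,
`Σ_{k=0}^d ε^{κ c_k} ≤ ε^{κ c₀} (1 + 1/(κ c₀ |log ε| − 1))`, uniformly in `d`. -/
theorem log_weight_sum_bound (c₀ κ ε : ℝ) (hc₀ : 0 < c₀) (hκ : 0 < κ)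
    (hε : ε ∈ Set.Ioo (0 : ℝ) 1) (hbig : 1 < κ * c₀ * |Real.log ε|) :
    ∀ d : ℕ,
      ∑ k ∈ Finset.range (d + 1), ε ^ (κ * (c₀ * (1 + Real.log (1 + (k : ℝ))))) ≤
        ε ^ (κ * c₀) * (1 + 1 / (κ * c₀ * |Real.log ε| - 1)) := by
  intro d
  obtain ⟨hε0, hε1⟩ := hε
  have hlog : Real.log ε < 0 := Real.log_neg hε0 hε1
  have habs : |Real.log ε| = -Real.log ε := abs_of_neg hlog
  set s := κ * c₀ * |Real.log ε| with hsdef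
  have hs : 1 < s := hbig
  have hterm : ∀ k : ℕ, ε ^ (κ * (c₀ * (1 + Real.log (1 + (k:ℝ)))))
      = ε ^ (κ * c₀) * (1 + (k:ℝ)) ^ (-s) := by
    intro k
    have h1k : (0:ℝ) < 1 + (k:ℝ) := by positivity
    rw [show κ * (c₀ * (1 + Real.log (1 + (k:ℝ))))
        = κ * c₀ + κ * c₀ * Real.log (1 + (k:ℝ)) by ring, Real.rpow_add hε0]
    congr 1
    rw [Real.rpow_def_of_pos hε0, Real.rpow_def_of_pos h1k]
    congr 1
    rw [hsdef, habs]; ring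
  rw [Finset.sum_congr rfl (fun k _ => hterm k), ← Finset.mul_sum]
  have hb2 : ∑ k ∈ Finset.range (d + 1), (1 + (k:ℝ)) ^ (-s) ≤ 1 + 1 / (s - 1) := by
    have hpow : (0:ℝ) ≤ ((d:ℝ) + 1) ^ (1 - s) := (rpow_pos_of_pos (by positivity) _).le
    have hs1 : (0:ℝ) < s - 1 := by linarith
    calc _ ≤ 1 + (1 - ((d:ℝ) + 1) ^ (1 - s)) / (s - 1) := sum_bound hs d
      _ ≤ 1 + 1 / (s - 1) := by gcongr; linarith
  exact mul_le_mul_of_nonneg_left hb2 (rpow_pos_of_pos hε0 _).le
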